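/- arXiv:2006.01003 — 2 statements merged into one kernel-verified Lean document; each statement's English description precedes it below -/
import Mathlib

section
/- Let λ ≠ 0 be a fixed real number. There exists a constant C > 0 such that for all sufficiently large X, ∫_{Δ}^{H} |S(λ·t, X)|² dt ≤ C · H · X^{2−γ} · (log X)², where Δ = X^{−12/13} log X, ε = X^{(37−38γ)/26} (log X)^{10}, and H = (log X)²/ε. -/
open Real Finset MeasureTheory Filter
open scoped Classical

/-- `e(t) = exp(2πit)`. -/
noncomputable def e (t : ℝ) : ℂ := Complex.exp (2 * Real.pi * Complex.I * t)

/-- `ψ(t) = {t} - 1/2`. -/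
noncomputable def psi (t : ℝ) : ℝ := Int.fract t - 1/2

/-- `p` is of the Piatetski-Shapiro form of type `γ`, i.e. `p = ⌊n^(1/γ)⌋` for some `n ≥ 1`. -/
def isPS (γ : ℝ) (p : ℕ) : Prop := ∃ n : ℕ, 0 < n ∧ (p : ℤ) = ⌊(n : ℝ) ^ (1/γ)⌋

/-- `S(α,X) = Σ_{λ0 X < p ≤ X, p ∈ ℙ_γ} p^(1-γ) e(αp) log p`. -/
noncomputable def S (γ lam0 X α : ℝ) : ℂ :=
  ∑ p ∈ (Finset.range (⌊X⌋₊ + 1)).filter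
      (fun p : ℕ => p.Prime ∧ lam0 * X < (p : ℝ) ∧ isPS γ p),
    (((p : ℝ) ^ (1 - γ) * Real.log p : ℝ) : ℂ) * e (α * p)

/-- `Σ(α,X) = γ Σ_{λ0 X < p ≤ X} e(αp) log p`. -/
noncomputable def Sig (γ lam0 X α : ℝ) : ℂ :=
  (γ : ℂ) * ∑ p ∈ (Finset.range (⌊X⌋₊ + 1)).filter
      (fun p : ℕ => p.Prime ∧ lam0 * X < (p : ℝ)),
    ((Real.log p : ℝ) : ℂ) * e (α * p)

/-- `Ω(α,X) = Σ_{λ0 X < p ≤ X} p^(1-γ) (ψ(-(p+1)^γ) - ψ(-p^γ)) e(αp) log p`. -/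
noncomputable def Om (γ lam0 X α : ℝ) : ℂ :=
  ∑ p ∈ (Finset.range (⌊X⌋₊ + 1)).filter
      (fun p : ℕ => p.Prime ∧ lam0 * X < (p : ℝ)),
    (((p : ℝ) ^ (1 - γ) * (psi (-((p : ℝ) + 1) ^ γ) - psi (-(p : ℝ) ^ γ)) * Real.log p : ℝ) : ℂ)
      * e (α * p)

/-- `I(α,X) = γ ∫_{λ0 X}^{X} e(αy) dy`. -/
noncomputable def Ig (γ lam0 X α : ℝ) : ℂ := (γ : ℂ) * ∫ y in lam0 * X..X, e (α * y)

lemma e_re (s : ℝ) : (e s).re = Real.cos (2 * Real.pi * s) := by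
  unfold e
  rw [show (2 * (Real.pi:ℂ) * Complex.I * s : ℂ) = ((2*Real.pi*s : ℝ):ℂ) * Complex.I by
    push_cast; ring, Complex.exp_ofReal_mul_I_re]

lemma e_mul_conj (x y : ℝ) : e x * (starRingEnd ℂ) (e y) = e (x - y) := by
  unfold e
  rw [← Complex.exp_conj, ← Complex.exp_add]
  congr 1
  simp only [map_mul, Complex.conj_I, Complex.conj_ofReal, map_ofNat]
  push_cast; ring

lemma cos_integral (c Δ H : ℝ) (hc : c ≠ 0) :
    |∫ t in Δ..H, Real.cos (c * t)| ≤ 2 / |c| := by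
  rw [intervalIntegral.integral_comp_mul_left (fun x => Real.cos x) hc, integral_cos]
  rw [smul_eq_mul, abs_mul, abs_inv]
  rw [div_eq_inv_mul]
  gcongr
  have h1 : |Real.sin (c*H)| ≤ 1 := Real.abs_sin_le_one _
  have h2 : |Real.sin (c*Δ)| ≤ 1 := Real.abs_sin_le_one _
  calc |Real.sin (c*H) - Real.sin (c*Δ)| ≤ |Real.sin (c*H)| + |Real.sin (c*Δ)| := abs_sub _ _
    _ ≤ 2 := by linarith

lemma norm_sum_sq (s : Finset ℕ) (a : ℕ → ℝ) (α : ℝ) :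
    ‖∑ p ∈ s, ((a p : ℝ) : ℂ) * e (α * p)‖ ^ 2
      = ∑ p ∈ s, ∑ q ∈ s, a p * a q * Real.cos (2 * Real.pi * α * ((p : ℝ) - q)) := by
  have h1 : ‖∑ p ∈ s, ((a p : ℝ) : ℂ) * e (α * p)‖ ^ 2
      = ((∑ p ∈ s, ((a p : ℝ) : ℂ) * e (α * p)) *
          (starRingEnd ℂ) (∑ p ∈ s, ((a p : ℝ) : ℂ) * e (α * p))).re := by
    rw [Complex.mul_conj, Complex.ofReal_re]
    simp [Complex.normSq_eq_norm_sq]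
  rw [h1, map_sum, Finset.sum_mul_sum]
  rw [Complex.re_sum]
  refine Finset.sum_congr rfl fun p _ => ?_
  rw [Complex.re_sum]
  refine Finset.sum_congr rfl fun q _ => ?_
  rw [map_mul, Complex.conj_ofReal,
    show ((a p : ℝ) : ℂ) * e (α * p) * (((a q : ℝ):ℂ) * (starRingEnd ℂ) (e (α * q)))
      = ((a p * a q : ℝ) : ℂ) * (e (α * p) * (starRingEnd ℂ) (e (α * q))) by push_cast; ring,
    e_mul_conj, Complex.re_ofReal_mul, e_re]
  rw [show 2 * Real.pi * (α * p - α * q) = 2 * Real.pi * α * ((p:ℝ) - q) by ring]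

lemma card_PS (γ : ℝ) (hγ0 : 0 < γ) (hγ2 : γ < 1) (lam0 X : ℝ) (hX : 1 ≤ X) :
    (((Finset.range (⌊X⌋₊ + 1)).filter
      (fun p : ℕ => p.Prime ∧ lam0 * X < (p : ℝ) ∧ isPS γ p)).card : ℝ) ≤ 2 * X ^ γ := by
  set F := (Finset.range (⌊X⌋₊ + 1)).filter
      (fun p : ℕ => p.Prime ∧ lam0 * X < (p : ℝ) ∧ isPS γ p) with hF
  have hmem : ∀ p ∈ F, (p : ℝ) ≤ X := by
    intro p hp
    rw [hF, Finset.mem_filter, Finset.mem_range] at hp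
    have h1 : p ≤ ⌊X⌋₊ := Nat.lt_succ_iff.mp hp.1
    calc (p : ℝ) ≤ (⌊X⌋₊ : ℝ) := by exact_mod_cast h1
      _ ≤ X := Nat.floor_le (by linarith)
  set φ : ℕ → ℕ := fun p => if h : isPS γ p then h.choose else 0 with hφ
  have hspec : ∀ p ∈ F, 0 < φ p ∧ (p : ℤ) = ⌊((φ p : ℕ) : ℝ) ^ (1/γ)⌋ := by
    intro p hp
    rw [hF, Finset.mem_filter] at hp
    have h := hp.2.2.2
    simp only [hφ, dif_pos h]
    exact h.choose_spec
  have hcard : F.card ≤ (Finset.Icc 1 ⌊(X+1)^γ⌋₊).card := by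
    apply Finset.card_le_card_of_injOn φ
    · intro p hp
      obtain ⟨hpos, heq⟩ := hspec p hp
      rw [Finset.mem_coe, Finset.mem_Icc]
      refine ⟨hpos, Nat.le_floor ?_⟩
      have hfl : ((p : ℝ)) ≤ ((φ p : ℕ) : ℝ) ^ (1/γ) := by
        have := Int.floor_le (((φ p : ℕ) : ℝ) ^ (1/γ))
        rw [← heq] at this; exact_mod_cast this
      have hfl2 : ((φ p : ℕ) : ℝ) ^ (1/γ) < (p : ℝ) + 1 := by
        have := Int.lt_floor_add_one (((φ p : ℕ) : ℝ) ^ (1/γ))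
        rw [← heq] at this; exact_mod_cast this
      have hnn : (0:ℝ) ≤ ((φ p : ℕ) : ℝ) ^ (1/γ) := Real.rpow_nonneg (by positivity) _
      have hid : (((φ p : ℕ) : ℝ) ^ (1/γ)) ^ γ = ((φ p : ℕ) : ℝ) := by
        rw [← Real.rpow_mul (by positivity : (0:ℝ) ≤ ((φ p : ℕ) : ℝ)),
          one_div_mul_cancel hγ0.ne', Real.rpow_one]
      calc ((φ p : ℕ) : ℝ) = (((φ p : ℕ) : ℝ) ^ (1/γ)) ^ γ := hid.symm
        _ ≤ ((p : ℝ) + 1) ^ γ := Real.rpow_le_rpow hnn hfl2.le hγ0.le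
        _ ≤ (X + 1) ^ γ := Real.rpow_le_rpow (by positivity)
            (by linarith [hmem p hp]) hγ0.le
    · intro p hp q hq hpq
      have h1 := (hspec p hp).2
      have h2 := (hspec q hq).2
      rw [hpq] at h1
      have : (p : ℤ) = (q : ℤ) := by rw [h1, h2]
      exact_mod_cast this
  calc (F.card : ℝ) ≤ ((Finset.Icc 1 ⌊(X+1)^γ⌋₊).card : ℝ) := by exact_mod_cast hcard
    _ = (⌊(X+1)^γ⌋₊ : ℝ) := by rw [Nat.card_Icc]; simp
    _ ≤ (X+1)^γ := Nat.floor_le (by positivity)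
    _ ≤ (2*X)^γ := Real.rpow_le_rpow (by linarith) (by linarith) hγ0.le
    _ = 2^γ * X^γ := Real.mul_rpow (by norm_num) (by linarith)
    _ ≤ 2^(1:ℝ) * X^γ := mul_le_mul_of_nonneg_right
        (Real.rpow_le_rpow_of_exponent_le (by norm_num) hγ2.le) (by positivity)
    _ = 2 * X^γ := by rw [Real.rpow_one]

lemma sum_inv_dist_le (s : Finset ℕ) (M p : ℕ) (hs : ∀ q ∈ s, q ≤ M) (hp : p ≤ M) :
    ∑ q ∈ s.erase p, |(p:ℝ) - (q:ℝ)|⁻¹ ≤ 2 * (harmonic M : ℝ) := by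
  have habs : ∀ q : ℕ, |(p:ℝ) - (q:ℝ)| = ((((p:ℤ) - q).natAbs : ℕ) : ℝ) := by
    intro q
    rw [Nat.cast_natAbs]
    push_cast
    ring_nf
  have hharm : ∑ k ∈ Finset.Icc 1 M, ((k:ℝ))⁻¹ = (harmonic M : ℝ) := by
    rw [harmonic_eq_sum_Icc]
    push_cast
    rfl
  set d : ℕ → ℕ := fun q => ((p:ℤ) - q).natAbs with hd
  have hbound : ∀ (t : Finset ℕ), t ⊆ s.erase p → Set.InjOn d t →
      ∑ q ∈ t, |(p:ℝ) - (q:ℝ)|⁻¹ ≤ (harmonic M : ℝ) := by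
    intro t hts hinj
    have h1 : ∑ q ∈ t, |(p:ℝ) - (q:ℝ)|⁻¹ = ∑ k ∈ t.image d, ((k:ℝ))⁻¹ := by
      rw [Finset.sum_image hinj]
      refine Finset.sum_congr rfl fun q _ => ?_
      rw [habs q]
    rw [h1, ← hharm]
    apply Finset.sum_le_sum_of_subset_of_nonneg
    · intro k hk
      rw [Finset.mem_image] at hk
      obtain ⟨q, hq, rfl⟩ := hk
      have hq' := hts hq
      rw [Finset.mem_erase] at hq'
      have hqM := hs q hq'.2
      have hqp : q ≠ p := hq'.1
      rw [Finset.mem_Icc]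
      constructor
      · simp only [hd]; omega
      · simp only [hd]; omega
    · intro k _ _; positivity
  have hsplit := Finset.sum_filter_add_sum_filter_not (s.erase p) (fun q => q < p)
      (fun q => |(p:ℝ) - (q:ℝ)|⁻¹)
  rw [← hsplit]
  have b1 := hbound ((s.erase p).filter (fun q => q < p)) (Finset.filter_subset _ _) ?_
  have b2 := hbound ((s.erase p).filter (fun q => ¬ q < p)) (Finset.filter_subset _ _) ?_
  · linarith
  · intro q hq q' hq' hqq'
    simp only [Finset.coe_filter, Set.mem_setOf_eq, Finset.mem_erase] at hq hq'
    simp only [hd] at hqq'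
    omega
  · intro q hq q' hq' hqq'
    simp only [Finset.coe_filter, Set.mem_setOf_eq, Finset.mem_erase] at hq hq'
    simp only [hd] at hqq'
    omega

theorem meanvalue_S_on_DeltaH (γ lam0 lam : ℝ) (hγ1 : 37/38 < γ) (hγ2 : γ < 1)
    (hl1 : 0 < lam0) (hl2 : lam0 < 1) (hlam : lam ≠ 0) :
    ∃ C : ℝ, 0 < C ∧ ∃ X0 : ℝ, ∀ X : ℝ, X0 ≤ X →
      (∫ t in (X ^ (-(12 : ℝ)/13) * Real.log X)..(Real.log X ^ 2 /
            (X ^ ((37 - 38 * γ) / 26) * Real.log X ^ 10)),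
          ‖S γ lam0 X (lam * t)‖ ^ 2) ≤
        C * (Real.log X ^ 2 / (X ^ ((37 - 38 * γ) / 26) * Real.log X ^ 10)) *
          X ^ (2 - γ) * Real.log X ^ 2 := by
  have hγ0 : 0 < γ := by linarith
  have hlam' : 0 < |lam| := abs_pos.mpr hlam
  set δ : ℝ := (38*γ - 37)/26 with hδdef
  have hδ : 0 < δ := by rw [hδdef]; linarith
  set C : ℝ := 2 + 8/(Real.pi * |lam|) with hCdef
  have hπ : 0 < Real.pi := Real.pi_pos
  have hC : 0 < C := by positivity
  refine ⟨C, hC, ?_⟩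
  have hlog9 : ∀ᶠ X : ℝ in atTop, (Real.log X)^9 ≤ X ^ δ := by
    have h := (isLittleO_log_rpow_atTop (show 0 < δ/9 by positivity)).def one_pos
    filter_upwards [h, eventually_ge_atTop (1:ℝ)] with X hb h1
    have hX0 : (0:ℝ) < X := lt_of_lt_of_le one_pos h1
    have hlogX : 0 ≤ Real.log X := Real.log_nonneg h1
    have hle : Real.log X ≤ X ^ (δ/9) := by
      rwa [Real.norm_eq_abs, Real.norm_eq_abs, abs_of_nonneg hlogX,
        abs_of_nonneg (Real.rpow_nonneg hX0.le _), one_mul] at hb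
    calc (Real.log X)^9 ≤ (X ^ (δ/9))^9 := pow_le_pow_left₀ hlogX hle 9
      _ = X ^ δ := by
          rw [← Real.rpow_natCast (X ^ (δ/9)) 9, ← Real.rpow_mul hX0.le]
          norm_num
  have hev : ∀ᶠ X : ℝ in atTop,
      (∫ t in (X ^ (-(12 : ℝ)/13) * Real.log X)..(Real.log X ^ 2 /
            (X ^ ((37 - 38 * γ) / 26) * Real.log X ^ 10)),
          ‖S γ lam0 X (lam * t)‖ ^ 2) ≤
        C * (Real.log X ^ 2 / (X ^ ((37 - 38 * γ) / 26) * Real.log X ^ 10)) *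
          X ^ (2 - γ) * Real.log X ^ 2 := by
    filter_upwards [eventually_ge_atTop (3:ℝ), hlog9] with X hX3 h9
    have hX0' : (0:ℝ) < X := by linarith
    have hX1 : (1:ℝ) ≤ X := by linarith
    set L := Real.log X with hLdef
    have hL1 : 1 ≤ L := by
      rw [hLdef, Real.le_log_iff_exp_le hX0']
      calc Real.exp 1 ≤ 2.7182818286 := Real.exp_one_lt_d9.le
        _ ≤ X := by linarith
    have hL0 : 0 < L := by linarith
    set Δ := X ^ (-(12:ℝ)/13) * L with hΔdef
    set H := L ^ 2 / (X ^ ((37 - 38*γ)/26) * L ^ 10) with hHdef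
    have hXδpos : 0 < X ^ δ := Real.rpow_pos_of_pos hX0' _
    have hHeq : H = X ^ δ / L ^ 8 := by
      have hexp : X ^ ((37 - 38*γ)/26) = (X ^ δ)⁻¹ := by
        rw [← Real.rpow_neg hX0'.le]
        congr 1
        rw [hδdef]; ring
      rw [hHdef, hexp]
      field_simp
    have hHpos : 0 < H := by rw [hHeq]; positivity
    have hLH : L ≤ H := by
      rw [hHeq, le_div_iff₀ (by positivity)]
      calc L * L^8 = L^9 := by ring
        _ ≤ X^δ := h9
    have hΔpos : 0 ≤ Δ := by
      rw [hΔdef]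
      have : (0:ℝ) < X ^ (-(12:ℝ)/13) := Real.rpow_pos_of_pos hX0' _
      positivity
    have hΔH : Δ ≤ H := by
      have h1 : X ^ (-(12:ℝ)/13) ≤ 1 :=
        Real.rpow_le_one_of_one_le_of_nonpos hX1 (by norm_num)
      calc Δ = X ^ (-(12:ℝ)/13) * L := hΔdef
        _ ≤ 1 * L := mul_le_mul_of_nonneg_right h1 (by linarith)
        _ = L := one_mul L
        _ ≤ H := hLH
    -- the sum set and coefficients
    set F := (Finset.range (⌊X⌋₊ + 1)).filter
        (fun p : ℕ => p.Prime ∧ lam0 * X < (p : ℝ) ∧ isPS γ p) with hFdef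
    set a : ℕ → ℝ := fun p => (p:ℝ) ^ (1-γ) * Real.log p with hadef
    set A : ℝ := X ^ (1-γ) * L with hAdef
    set c : ℕ → ℕ → ℝ := fun p q => 2 * Real.pi * lam * ((p:ℝ) - q) with hcdef
    have hA0 : 0 ≤ A := by
      have : (0:ℝ) < X ^ (1-γ) := Real.rpow_pos_of_pos hX0' _
      positivity
    have hmemX : ∀ p ∈ F, (p : ℝ) ≤ X ∧ 2 ≤ p := by
      intro p hp
      rw [hFdef, Finset.mem_filter, Finset.mem_range] at hp
      refine ⟨?_, hp.2.1.two_le⟩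
      have h1 : p ≤ ⌊X⌋₊ := Nat.lt_succ_iff.mp hp.1
      calc (p : ℝ) ≤ (⌊X⌋₊ : ℝ) := by exact_mod_cast h1
        _ ≤ X := Nat.floor_le hX0'.le
    have haF : ∀ p ∈ F, 0 ≤ a p ∧ a p ≤ A := by
      intro p hp
      obtain ⟨hpX, hp2⟩ := hmemX p hp
      have hp1 : (1:ℝ) ≤ p := by exact_mod_cast hp2.trans' (by norm_num)
      have hl0 : 0 ≤ Real.log p := Real.log_nonneg hp1
      have hr0 : (0:ℝ) ≤ (p:ℝ) ^ (1-γ) := Real.rpow_nonneg (by positivity) _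
      constructor
      · exact mul_nonneg hr0 hl0
      · rw [hadef, hAdef]
        apply mul_le_mul
        · exact Real.rpow_le_rpow (by positivity) hpX (by linarith)
        · rw [hLdef]; exact Real.log_le_log (by linarith) hpX
        · exact hl0
        · positivity
    -- pointwise expansion
    have hSdef : ∀ t : ℝ, S γ lam0 X (lam * t) = ∑ p ∈ F, ((a p : ℝ) : ℂ) * e ((lam*t) * p) :=
      fun t => rfl
    have hpoint : ∀ t : ℝ, ‖S γ lam0 X (lam * t)‖ ^ 2
        = ∑ p ∈ F, ∑ q ∈ F, a p * a q * Real.cos (c p q * t) := by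
      intro t
      rw [hSdef t, norm_sum_sq F a (lam*t)]
      refine Finset.sum_congr rfl fun p _ => Finset.sum_congr rfl fun q _ => ?_
      rw [show 2 * Real.pi * (lam*t) * ((p:ℝ) - q) = c p q * t by rw [hcdef]; ring]
    -- integrate term by term
    have hcont : ∀ (p q : ℕ), Continuous (fun t : ℝ => a p * a q * Real.cos (c p q * t)) := by
      intro p q
      exact continuous_const.mul (Real.continuous_cos.comp (continuous_const.mul continuous_id))
    have hIeq : (∫ t in Δ..H, ‖S γ lam0 X (lam*t)‖^2)
        = ∑ p ∈ F, ∑ q ∈ F, a p * a q * ∫ t in Δ..H, Real.cos (c p q * t) := by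
      rw [intervalIntegral.integral_congr (fun t _ => hpoint t)]
      rw [intervalIntegral.integral_finset_sum (fun p _ =>
        (continuous_finset_sum F (fun q _ => hcont p q)).intervalIntegrable Δ H)]
      refine Finset.sum_congr rfl fun p _ => ?_
      rw [intervalIntegral.integral_finset_sum (fun q _ => (hcont p q).intervalIntegrable Δ H)]
      refine Finset.sum_congr rfl fun q _ => ?_
      exact intervalIntegral.integral_const_mul _ _
    -- bound diagonal terms
    have hdiag : ∀ p ∈ F, a p * a p * (∫ t in Δ..H, Real.cos (c p p * t)) ≤ A^2 * H := by
      intro p hp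
      have hc0 : c p p = 0 := by rw [hcdef]; simp
      have : (∫ t in Δ..H, Real.cos (c p p * t)) = H - Δ := by
        simp [hc0]
      rw [this]
      obtain ⟨ha0, haA⟩ := haF p hp
      calc a p * a p * (H - Δ) ≤ A * A * H := by
            apply mul_le_mul (mul_le_mul haA haA ha0 hA0) (by linarith) (by linarith)
              (by positivity)
        _ = A^2 * H := by ring
    -- bound off-diagonal terms
    have hoff : ∀ p ∈ F, ∀ q ∈ F.erase p,
        a p * a q * (∫ t in Δ..H, Real.cos (c p q * t))
          ≤ A^2 / (Real.pi * |lam|) * |(p:ℝ) - (q:ℝ)|⁻¹ := by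
      intro p hp q hq
      have hqF : q ∈ F := Finset.mem_of_mem_erase hq
      have hqp : q ≠ p := (Finset.mem_erase.mp hq).1
      have hdne : ((p:ℝ) - q) ≠ 0 := by
        intro h
        apply hqp
        have : (p:ℝ) = q := by linarith
        exact_mod_cast this.symm
      have hcne : c p q ≠ 0 := by
        rw [hcdef]
        exact mul_ne_zero (mul_ne_zero (by positivity) hlam) hdne
      have habs : |c p q| = 2 * Real.pi * |lam| * |(p:ℝ) - (q:ℝ)| := by
        rw [hcdef]
        simp only
        rw [abs_mul, abs_mul, abs_mul]
        rw [abs_of_nonneg (by norm_num : (0:ℝ) ≤ 2), abs_of_nonneg hπ.le]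
      have hd0 : 0 < |(p:ℝ) - (q:ℝ)| := abs_pos.mpr hdne
      have hint := cos_integral (c p q) Δ H hcne
      obtain ⟨hap0, hapA⟩ := haF p hp
      obtain ⟨haq0, haqA⟩ := haF q hqF
      calc a p * a q * (∫ t in Δ..H, Real.cos (c p q * t))
          ≤ a p * a q * (2 / |c p q|) := by
            apply mul_le_mul_of_nonneg_left _ (mul_nonneg hap0 haq0)
            exact (le_abs_self _).trans hint
        _ ≤ A * A * (2 / |c p q|) := by
            apply mul_le_mul_of_nonneg_right (mul_le_mul hapA haqA haq0 hA0)
            positivity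
        _ = A^2 / (Real.pi * |lam|) * |(p:ℝ) - (q:ℝ)|⁻¹ := by
            rw [habs]
            field_simp
    -- the harmonic number bound
    have hharm : (harmonic ⌊X⌋₊ : ℝ) ≤ 1 + L := by
      rw [hLdef]
      exact harmonic_floor_le_one_add_log X hX1
    have hharm0 : (0:ℝ) ≤ (harmonic ⌊X⌋₊ : ℝ) := by
      rcases Nat.eq_zero_or_pos ⌊X⌋₊ with h | h
      · simp [h, harmonic]
      · exact_mod_cast (harmonic_pos h.ne').le
    -- per-p bound
    have hrow : ∀ p ∈ F, ∑ q ∈ F, a p * a q * (∫ t in Δ..H, Real.cos (c p q * t))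
        ≤ A^2 * H + A^2 / (Real.pi * |lam|) * (2 * (1 + L)) := by
      intro p hp
      have hpM : p ≤ ⌊X⌋₊ := by
        have := hp
        rw [hFdef, Finset.mem_filter, Finset.mem_range] at this
        omega
      have hsM : ∀ q ∈ F, q ≤ ⌊X⌋₊ := by
        intro q hq
        have := hq
        rw [hFdef, Finset.mem_filter, Finset.mem_range] at this
        omega
      rw [← Finset.sum_erase_add F _ hp]
      have h1 : ∑ q ∈ F.erase p, a p * a q * (∫ t in Δ..H, Real.cos (c p q * t))
          ≤ A^2 / (Real.pi * |lam|) * (2 * (1 + L)) := by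
        calc ∑ q ∈ F.erase p, a p * a q * (∫ t in Δ..H, Real.cos (c p q * t))
            ≤ ∑ q ∈ F.erase p, A^2 / (Real.pi * |lam|) * |(p:ℝ) - (q:ℝ)|⁻¹ :=
              Finset.sum_le_sum (fun q hq => hoff p hp q hq)
          _ = A^2 / (Real.pi * |lam|) * ∑ q ∈ F.erase p, |(p:ℝ) - (q:ℝ)|⁻¹ := by
              rw [Finset.mul_sum]
          _ ≤ A^2 / (Real.pi * |lam|) * (2 * (harmonic ⌊X⌋₊ : ℝ)) := by
              apply mul_le_mul_of_nonneg_left (sum_inv_dist_le F ⌊X⌋₊ p hsM hpM)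
              positivity
          _ ≤ A^2 / (Real.pi * |lam|) * (2 * (1 + L)) := by
              apply mul_le_mul_of_nonneg_left _ (by positivity)
              linarith
      linarith [hdiag p hp]
    -- sum over p
    have hcardF : (F.card : ℝ) ≤ 2 * X ^ γ := card_PS γ hγ0 hγ2 lam0 X hX1
    have htotal : (∫ t in Δ..H, ‖S γ lam0 X (lam*t)‖^2)
        ≤ 2 * X ^ γ * (A^2 * H + A^2 / (Real.pi * |lam|) * (2 * (1 + L))) := by
      rw [hIeq]
      have hB0 : 0 ≤ A^2 * H + A^2 / (Real.pi * |lam|) * (2 * (1 + L)) := by positivity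
      calc ∑ p ∈ F, ∑ q ∈ F, a p * a q * (∫ t in Δ..H, Real.cos (c p q * t))
          ≤ ∑ p ∈ F, (A^2 * H + A^2 / (Real.pi * |lam|) * (2 * (1 + L))) :=
            Finset.sum_le_sum hrow
        _ = (F.card : ℝ) * (A^2 * H + A^2 / (Real.pi * |lam|) * (2 * (1 + L))) := by
            rw [Finset.sum_const, nsmul_eq_mul]
        _ ≤ 2 * X ^ γ * (A^2 * H + A^2 / (Real.pi * |lam|) * (2 * (1 + L))) :=
            mul_le_mul_of_nonneg_right hcardF hB0
    -- final arithmetic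
    have hpow : X ^ γ * A^2 = X ^ (2-γ) * L^2 := by
      have e1 : (X^(1-γ))^(2:ℕ) = X^((1-γ)*(2:ℝ)) := by
        rw [← Real.rpow_natCast (X^(1-γ)) 2, ← Real.rpow_mul hX0'.le]
        norm_num
      rw [hAdef, mul_pow, e1, ← mul_assoc, ← Real.rpow_add hX0',
        show γ + (1-γ)*(2:ℝ) = 2-γ by ring]
    have hXg0 : (0:ℝ) ≤ X ^ (2-γ) := (Real.rpow_pos_of_pos hX0' _).le
    calc (∫ t in Δ..H, ‖S γ lam0 X (lam*t)‖^2)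
        ≤ 2 * X ^ γ * (A^2 * H + A^2 / (Real.pi * |lam|) * (2 * (1 + L))) := htotal
      _ = 2 * (X ^ γ * A^2) * H + (4/(Real.pi * |lam|)) * (X ^ γ * A^2) * (1 + L) := by
          field_simp
          ring
      _ = 2 * (X ^ (2-γ) * L^2) * H + (4/(Real.pi * |lam|)) * (X ^ (2-γ) * L^2) * (1 + L) := by
          rw [hpow]
      _ ≤ 2 * (X ^ (2-γ) * L^2) * H + (4/(Real.pi * |lam|)) * (X ^ (2-γ) * L^2) * (2 * L) := by
          apply add_le_add_right
          apply mul_le_mul_of_nonneg_left (by linarith) (by positivity)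
      _ = 2 * H * (X ^ (2-γ) * L^2) + (8/(Real.pi * |lam|)) * L * (X ^ (2-γ) * L^2) := by
          ring
      _ ≤ 2 * H * (X ^ (2-γ) * L^2) + (8/(Real.pi * |lam|)) * H * (X ^ (2-γ) * L^2) := by
          apply add_le_add_right
          apply mul_le_mul_of_nonneg_right _ (by positivity)
          apply mul_le_mul_of_nonneg_left hLH (by positivity)
      _ = C * H * X ^ (2-γ) * L^2 := by rw [hCdef]; ring
  obtain ⟨X0, hX0⟩ := Filter.eventually_atTop.mp hev
  exact ⟨X0, hX0⟩
end

section
/- Let λ1, λ2, λ3 be non-zero real numbers, not all of the same sign, and let η be real. Then there exist λ0 with 0 < λ0 < 1 and a constant c > 0 such that for all sufficiently large X and all ε with 0 < ε < 1, the three-dimensional Lebesgue measure of the set { (y1, y2, y3) ∈ [λ0·X, X]³ : |λ1·y1 + λ2·y2 + λ3·y3 + η| ≤ 3ε/4 } is at least c · ε · X². -/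
open Real Finset MeasureTheory Filter
open scoped Classical

lemma shear_mp (α β c0 : ℝ) :
    MeasurePreserving
      (fun y : ℝ × ℝ × ℝ => (y.1, (y.2.1, y.2.2 - (α * y.1 + β * y.2.1 + c0))))
      volume volume := by
  rw [show (volume : Measure (ℝ × ℝ × ℝ)) = volume.prod (volume.prod volume) by
    rw [← Measure.volume_eq_prod, ← Measure.volume_eq_prod]]
  refine MeasurePreserving.skew_product (μd := (volume : Measure ℝ).prod volume)
    (g := fun (a : ℝ) (p : ℝ × ℝ) => (p.1, p.2 - (α * a + β * p.1 + c0)))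
    (MeasurePreserving.id (volume : Measure ℝ)) ?_ ?_
  · apply Measurable.prodMk
    · exact measurable_snd.fst
    · fun_prop
  · refine Filter.Eventually.of_forall (fun a => ?_)
    have h2 : ((volume : Measure ℝ).prod volume) = (volume : Measure (ℝ × ℝ)) :=
      (Measure.volume_eq_prod ℝ ℝ).symm
    rw [h2]
    exact (MeasurePreserving.skew_product (μd := (volume : Measure ℝ))
      (g := fun b c : ℝ => c - (α * a + β * b + c0))
      (MeasurePreserving.id (volume : Measure ℝ))
      (by fun_prop)
      (Filter.Eventually.of_forall (fun b => by
        have := map_add_right_eq_self (volume : Measure ℝ) (-(α * a + β * b + c0))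
        simpa [sub_eq_add_neg] using this))).map_eq

lemma vol_shear (p1 p2 L d α β c0 : ℝ) (hL : 0 ≤ L) (hd : 0 ≤ d) :
    volume {y : ℝ × ℝ × ℝ | y.1 ∈ Set.Icc p1 (p1 + L) ∧ y.2.1 ∈ Set.Icc p2 (p2 + L) ∧
      y.2.2 ∈ Set.Icc (α * y.1 + β * y.2.1 + c0) (α * y.1 + β * y.2.1 + c0 + d)}
    = ENNReal.ofReal (L * L * d) := by
  have hset : {y : ℝ × ℝ × ℝ | y.1 ∈ Set.Icc p1 (p1 + L) ∧ y.2.1 ∈ Set.Icc p2 (p2 + L) ∧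
      y.2.2 ∈ Set.Icc (α * y.1 + β * y.2.1 + c0) (α * y.1 + β * y.2.1 + c0 + d)}
      = (fun y : ℝ × ℝ × ℝ => (y.1, (y.2.1, y.2.2 - (α * y.1 + β * y.2.1 + c0)))) ⁻¹'
        (Set.Icc p1 (p1 + L) ×ˢ (Set.Icc p2 (p2 + L) ×ˢ Set.Icc 0 d)) := by
    ext y
    simp only [Set.mem_setOf_eq, Set.mem_preimage, Set.mem_prod, Set.mem_Icc]
    constructor
    · rintro ⟨⟨a1, a2⟩, ⟨b1, b2⟩, c1, c2⟩
      exact ⟨⟨a1, a2⟩, ⟨b1, b2⟩, by linarith, by linarith⟩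
    · rintro ⟨⟨a1, a2⟩, ⟨b1, b2⟩, c1, c2⟩
      exact ⟨⟨a1, a2⟩, ⟨b1, b2⟩, by linarith, by linarith⟩
  rw [hset, (shear_mp α β c0).measure_preimage
    ((measurableSet_Icc.prod (measurableSet_Icc.prod measurableSet_Icc)).nullMeasurableSet)]
  rw [show (volume : Measure (ℝ × ℝ × ℝ)) = volume.prod (volume.prod volume) by
    rw [← Measure.volume_eq_prod, ← Measure.volume_eq_prod]]
  rw [Measure.prod_prod, Measure.prod_prod, Real.volume_Icc, Real.volume_Icc, Real.volume_Icc]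
  rw [show p1 + L - p1 = L by ring, show p2 + L - p2 = L by ring, sub_zero]
  rw [← ENNReal.ofReal_mul hL, ← ENNReal.ofReal_mul hL]
  congr 1; ring

lemma helper_core (A B C η lam0 X ε p1 p2 k : ℝ) (hC : C ≠ 0)
    (hL : 0 ≤ lam0 * X) (hk : 0 < k) (hε : 0 < ε)
    (hkC : |C| * k ≤ 3/4)
    (hp1 : lam0 * X ≤ p1) (hp1' : p1 + lam0 * X ≤ X)
    (hp2 : lam0 * X ≤ p2) (hp2' : p2 + lam0 * X ≤ X)
    (ht : ∀ y1 ∈ Set.Icc p1 (p1 + lam0 * X), ∀ y2 ∈ Set.Icc p2 (p2 + lam0 * X),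
      lam0 * X ≤ (-A/C) * y1 + (-B/C) * y2 + (-η/C) ∧
      (-A/C) * y1 + (-B/C) * y2 + (-η/C) + k * ε ≤ X) :
    ENNReal.ofReal (lam0^2 * k * ε * X^2) ≤
      volume {y : ℝ × ℝ × ℝ | y.1 ∈ Set.Icc (lam0 * X) X ∧ y.2.1 ∈ Set.Icc (lam0 * X) X ∧
        y.2.2 ∈ Set.Icc (lam0 * X) X ∧ |A * y.1 + B * y.2.1 + C * y.2.2 + η| ≤ 3 * ε / 4} := by
  have hd : 0 ≤ k * ε := by positivity
  have hsub : {y : ℝ × ℝ × ℝ | y.1 ∈ Set.Icc p1 (p1 + lam0 * X) ∧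
      y.2.1 ∈ Set.Icc p2 (p2 + lam0 * X) ∧
      y.2.2 ∈ Set.Icc ((-A/C) * y.1 + (-B/C) * y.2.1 + (-η/C))
        ((-A/C) * y.1 + (-B/C) * y.2.1 + (-η/C) + k * ε)} ⊆
      {y : ℝ × ℝ × ℝ | y.1 ∈ Set.Icc (lam0 * X) X ∧ y.2.1 ∈ Set.Icc (lam0 * X) X ∧
        y.2.2 ∈ Set.Icc (lam0 * X) X ∧ |A * y.1 + B * y.2.1 + C * y.2.2 + η| ≤ 3 * ε / 4} := by
    rintro ⟨y1, y2, y3⟩ ⟨hy1, hy2, hy3⟩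
    simp only [Set.mem_Icc, Set.mem_setOf_eq] at *
    obtain ⟨htl, htu⟩ := ht y1 (Set.mem_Icc.mpr hy1) y2 (Set.mem_Icc.mpr hy2)
    refine ⟨⟨by linarith [hy1.1], by linarith [hy1.2]⟩,
      ⟨by linarith [hy2.1], by linarith [hy2.2]⟩,
      ⟨by linarith [hy3.1], by linarith [hy3.2]⟩, ?_⟩
    have hkey : A * y1 + B * y2 + C * y3 + η
        = C * (y3 - ((-A/C) * y1 + (-B/C) * y2 + (-η/C))) := by
      field_simp
      ring
    rw [hkey, abs_mul]
    have habs : |y3 - ((-A/C) * y1 + (-B/C) * y2 + (-η/C))| ≤ k * ε := by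
      rw [abs_le]
      constructor
      · linarith [hy3.1]
      · linarith [hy3.2]
    calc |C| * |y3 - ((-A/C) * y1 + (-B/C) * y2 + (-η/C))| ≤ |C| * (k * ε) :=
          mul_le_mul_of_nonneg_left habs (abs_nonneg C)
      _ = (|C| * k) * ε := by ring
      _ ≤ (3/4) * ε := mul_le_mul_of_nonneg_right hkC hε.le
      _ = 3 * ε / 4 := by ring
  calc ENNReal.ofReal (lam0^2 * k * ε * X^2)
      = ENNReal.ofReal ((lam0 * X) * (lam0 * X) * (k * ε)) := by congr 1; ring
    _ = volume {y : ℝ × ℝ × ℝ | y.1 ∈ Set.Icc p1 (p1 + lam0 * X) ∧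
        y.2.1 ∈ Set.Icc p2 (p2 + lam0 * X) ∧
        y.2.2 ∈ Set.Icc ((-A/C) * y.1 + (-B/C) * y.2.1 + (-η/C))
          ((-A/C) * y.1 + (-B/C) * y.2.1 + (-η/C) + k * ε)} :=
        (vol_shear _ _ _ _ _ _ _ hL hd).symm
    _ ≤ _ := measure_mono hsub

lemma tlemma (α β c0 X r lam0 : ℝ) (hα : 0 < α)
    (hr : r = min (1/2) (1/(4*α)))
    (hlam0 : lam0 = α * r / (8 * (1 + α + |β|)))
    (hX : max 2 (8*(1+|c0|)/(α*r)) ≤ X) :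
    (0 < lam0 ∧ lam0 < 1) ∧
    (lam0 * X ≤ r * X ∧ r * X + lam0 * X ≤ X) ∧
    (lam0 * X + lam0 * X ≤ X) ∧
    ∀ u ∈ Set.Icc (r*X) (r*X + lam0*X), ∀ v ∈ Set.Icc (lam0*X) (lam0*X + lam0*X),
      lam0 * X ≤ α*u + β*v + c0 ∧ α*u + β*v + c0 + 1 ≤ X := by
  have hrpos : 0 < r := by rw [hr]; positivity
  have hr12 : r ≤ 1/2 := by rw [hr]; exact min_le_left _ _
  set m := α * r with hm
  have hmpos : 0 < m := mul_pos hα hrpos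
  have hm4 : m ≤ 1/4 := by
    have h1 : r ≤ 1/(4*α) := by rw [hr]; exact min_le_right _ _
    calc m = α * r := hm
      _ ≤ α * (1/(4*α)) := mul_le_mul_of_nonneg_left h1 hα.le
      _ = 1/4 := by field_simp
  set D := 8 * (1 + α + |β|) with hD
  have habsβ : 0 ≤ |β| := abs_nonneg β
  have hD8 : 8 ≤ D := by rw [hD]; linarith
  have hDα : 8 * α ≤ D := by rw [hD]; linarith
  have hDβ : 8 * |β| ≤ D := by rw [hD]; linarith
  have hDpos : 0 < D := by linarith
  have hlam0pos : 0 < lam0 := by rw [hlam0]; exact div_pos hmpos hDpos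
  have hlam0m : lam0 ≤ m / 8 := by
    rw [hlam0]
    exact div_le_div_of_nonneg_left hmpos.le (by norm_num) hD8
  have hlam0r : lam0 ≤ r / 8 := by
    rw [hlam0, hm]
    calc α * r / D ≤ α * r / (8 * α) :=
          div_le_div_of_nonneg_left (by positivity) (by positivity) hDα
      _ = r / 8 := by field_simp
  have hαlam0 : α * lam0 ≤ m / 8 := by
    rw [hlam0]
    calc α * (m / D) = (α * m) / D := by ring
      _ ≤ (α * m) / (8 * α) :=
          div_le_div_of_nonneg_left (by positivity) (by positivity) hDα
      _ = m / 8 := by field_simp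
  have hβlam0 : |β| * (lam0 + lam0) ≤ m / 4 := by
    rcases eq_or_lt_of_le habsβ with hb0 | hbpos
    · rw [← hb0]; simp; positivity
    · rw [hlam0]
      calc |β| * (m / D + m / D) = (2 * |β| * m) / D := by ring
        _ ≤ (2 * |β| * m) / (8 * |β|) :=
            div_le_div_of_nonneg_left
              (by have := mul_pos (mul_pos two_pos hbpos) hmpos; linarith)
              (by linarith) hDβ
        _ = m / 4 := by field_simp; ring
  have hX2 : 2 ≤ X := le_trans (le_max_left _ _) hX
  have hX0 : 0 ≤ X := by linarith
  have hXc0 : 8 * (1 + |c0|) ≤ m * X := by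
    have h1 : 8 * (1 + |c0|) / m ≤ X := le_trans (le_max_right _ _) hX
    have := (div_le_iff₀ hmpos).mp h1
    linarith
  have hlam0lt : lam0 < 1 := by linarith
  have hbox1 : lam0 * X ≤ r * X :=
    mul_le_mul_of_nonneg_right (by linarith) hX0
  have hbox1' : r * X + lam0 * X ≤ X := by
    nlinarith [mul_nonneg hX0 (show (0:ℝ) ≤ 1 - r - lam0 by linarith)]
  have hbox2 : lam0 * X + lam0 * X ≤ X := by
    nlinarith [mul_nonneg hX0 (show (0:ℝ) ≤ 1 - lam0 - lam0 by linarith)]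
  refine ⟨⟨hlam0pos, hlam0lt⟩, ⟨hbox1, hbox1'⟩, hbox2, ?_⟩
  rintro u ⟨hu1, hu2⟩ v ⟨hv1, hv2⟩
  have hvpos : 0 ≤ v := le_trans (mul_nonneg hlam0pos.le hX0) hv1
  have hαu_lo : m * X ≤ α * u := by
    have h0 := mul_le_mul_of_nonneg_left hu1 hα.le
    have hmX' : m * X = α * (r * X) := by rw [hm]; ring
    linarith [h0, hmX']
  have hmX : m * X = α * (r * X) := by rw [hm]; ring
  have hαu_hi : α * u ≤ m * X + (m / 8) * X := by
    have h1 := mul_le_mul_of_nonneg_left hu2 hα.le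
    have h2 := mul_le_mul_of_nonneg_right hαlam0 hX0
    nlinarith [h1, h2, hmX]
  have hβv : |β * v| ≤ (m / 4) * X := by
    rw [abs_mul, abs_of_nonneg hvpos]
    have h1 : v ≤ (lam0 + lam0) * X := by linarith [hv2]
    have h2 := mul_le_mul_of_nonneg_left h1 habsβ
    have h3 := mul_le_mul_of_nonneg_right hβlam0 hX0
    linarith [h2, h3]
  have hβv1 : -((m / 4) * X) ≤ β * v := by
    have := neg_abs_le (β * v); linarith
  have hβv2 : β * v ≤ (m / 4) * X := le_trans (le_abs_self _) hβv
  have hc01 : -|c0| ≤ c0 := neg_abs_le c0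
  have hc02 : c0 ≤ |c0| := le_abs_self c0
  have hlam0mX : lam0 * X ≤ (m / 8) * X := mul_le_mul_of_nonneg_right hlam0m hX0
  have hmX4 : m * X ≤ (1/4) * X := mul_le_mul_of_nonneg_right hm4 hX0
  constructor
  · linarith
  · linarith

theorem volume_lower_bound (lam1 lam2 lam3 η : ℝ)
    (h1 : lam1 ≠ 0) (h2 : lam2 ≠ 0) (h3 : lam3 ≠ 0)
    (hsign : ¬ ((0 < lam1 ∧ 0 < lam2 ∧ 0 < lam3) ∨ (lam1 < 0 ∧ lam2 < 0 ∧ lam3 < 0))) :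
    ∃ lam0 : ℝ, 0 < lam0 ∧ lam0 < 1 ∧ ∃ c : ℝ, 0 < c ∧ ∃ X0 : ℝ, ∀ X : ℝ, X0 ≤ X →
      ∀ ε : ℝ, 0 < ε → ε < 1 →
        ENNReal.ofReal (c * ε * X ^ 2) ≤
          volume {y : ℝ × ℝ × ℝ |
            y.1 ∈ Set.Icc (lam0 * X) X ∧ y.2.1 ∈ Set.Icc (lam0 * X) X ∧
            y.2.2 ∈ Set.Icc (lam0 * X) X ∧
            |lam1 * y.1 + lam2 * y.2.1 + lam3 * y.2.2 + η| ≤ 3 * ε / 4} := by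
  have hcase : lam1 * lam3 < 0 ∨ lam2 * lam3 < 0 := by
    rcases h1.lt_or_gt with a | a <;> rcases h2.lt_or_gt with b | b <;>
      rcases h3.lt_or_gt with c | c
    · exact absurd (Or.inr ⟨a, b, c⟩) hsign
    · exact Or.inl (mul_neg_of_neg_of_pos a c)
    · exact Or.inr (mul_neg_of_pos_of_neg b c)
    · exact Or.inl (mul_neg_of_neg_of_pos a c)
    · exact Or.inl (mul_neg_of_pos_of_neg a c)
    · exact Or.inr (mul_neg_of_neg_of_pos b c)
    · exact Or.inl (mul_neg_of_pos_of_neg a c)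
    · exact absurd (Or.inl ⟨a, b, c⟩) hsign
  have habs3 : 0 < |lam3| := abs_pos.mpr h3
  set k := min 1 (3 / (4 * |lam3|)) with hkdef
  have hk : 0 < k := lt_min one_pos (by positivity)
  have hkC : |lam3| * k ≤ 3/4 := by
    calc |lam3| * k ≤ |lam3| * (3/(4*|lam3|)) :=
          mul_le_mul_of_nonneg_left (min_le_right _ _) habs3.le
      _ = 3/4 := by field_simp
  have hk1 : k ≤ 1 := min_le_left _ _
  rcases hcase with hAC | hBC
  · have hα : 0 < -lam1/lam3 := by
      have ha' : 0 < -(lam1*lam3) := neg_pos.mpr hAC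
      have hb' : (0:ℝ) < lam3^2 := by positivity
      have hc' : -lam1/lam3 = -(lam1*lam3)/lam3^2 := by field_simp
      rw [hc']; exact div_pos ha' hb'
    set α := -lam1/lam3 with hαdef
    set β := -lam2/lam3 with hβdef
    set c0 := -η/lam3 with hc0def
    set r := min (1/2) (1/(4*α)) with hrdef
    set lam0 := α * r / (8 * (1 + α + |β|)) with hl0def
    set X0 := max 2 (8*(1+|c0|)/(α*r)) with hX0def
    obtain ⟨⟨hl0p, hl0lt⟩, -, -, -⟩ := tlemma α β c0 X0 r lam0 hα hrdef hl0def (le_refl X0)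
    refine ⟨lam0, hl0p, hl0lt, lam0^2 * k, by positivity, X0, fun X hX ε hε hε1 => ?_⟩
    obtain ⟨-, ⟨hb1, hb1'⟩, hb2, hT⟩ := tlemma α β c0 X r lam0 hα hrdef hl0def hX
    have hX2 : (2:ℝ) ≤ X := le_trans (le_max_left 2 (8*(1+|c0|)/(α*r))) hX
    have hL : 0 ≤ lam0 * X := mul_nonneg hl0p.le (by linarith)
    have hkε : k * ε ≤ 1 := by nlinarith [hk.le, hk1, hε.le, hε1.le]
    have hcore := helper_core lam1 lam2 lam3 η lam0 X ε (r*X) (lam0*X) k h3 hL hk hε hkC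
      hb1 hb1' (le_refl _) hb2 ?_
    · exact hcore
    · intro y1 hy1 y2 hy2
      obtain ⟨l, u⟩ := hT y1 hy1 y2 hy2
      exact ⟨l, by linarith⟩
  · have hα : 0 < -lam2/lam3 := by
      have ha' : 0 < -(lam2*lam3) := neg_pos.mpr hBC
      have hb' : (0:ℝ) < lam3^2 := by positivity
      have hc' : -lam2/lam3 = -(lam2*lam3)/lam3^2 := by field_simp
      rw [hc']; exact div_pos ha' hb'
    set α := -lam2/lam3 with hαdef
    set β := -lam1/lam3 with hβdef
    set c0 := -η/lam3 with hc0def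
    set r := min (1/2) (1/(4*α)) with hrdef
    set lam0 := α * r / (8 * (1 + α + |β|)) with hl0def
    set X0 := max 2 (8*(1+|c0|)/(α*r)) with hX0def
    obtain ⟨⟨hl0p, hl0lt⟩, -, -, -⟩ := tlemma α β c0 X0 r lam0 hα hrdef hl0def (le_refl X0)
    refine ⟨lam0, hl0p, hl0lt, lam0^2 * k, by positivity, X0, fun X hX ε hε hε1 => ?_⟩
    obtain ⟨-, ⟨hb1, hb1'⟩, hb2, hT⟩ := tlemma α β c0 X r lam0 hα hrdef hl0def hX
    have hX2 : (2:ℝ) ≤ X := le_trans (le_max_left 2 (8*(1+|c0|)/(α*r))) hX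
    have hL : 0 ≤ lam0 * X := mul_nonneg hl0p.le (by linarith)
    have hkε : k * ε ≤ 1 := by nlinarith [hk.le, hk1, hε.le, hε1.le]
    have hcore := helper_core lam1 lam2 lam3 η lam0 X ε (lam0*X) (r*X) k h3 hL hk hε hkC
      (le_refl _) hb2 hb1 hb1' ?_
    · exact hcore
    · intro y1 hy1 y2 hy2
      obtain ⟨l, u⟩ := hT y2 hy2 y1 hy1
      have hgoal1 : lam0 * X ≤ (-lam1/lam3) * y1 + (-lam2/lam3) * y2 + (-η/lam3) := by
        rw [← hαdef, ← hβdef, ← hc0def] at *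
        linarith
      have hgoal2 : (-lam1/lam3) * y1 + (-lam2/lam3) * y2 + (-η/lam3) + k * ε ≤ X := by
        rw [← hαdef, ← hβdef, ← hc0def] at *
        linarith
      exact ⟨hgoal1, hgoal2⟩
end
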